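/- Let $1<p<q<\nu$, $0<\alpha<1$, let $A>0$, $B\ge0$, $S>0$, $L>0$, and define $\psi(t)=t^{p-\nu}A+t^{q-\nu}B-t^{-\nu-\alpha+1}S$ on $(0,\infty)$. If $\max_{t>0}\psi(t)>L$, then there exist exactly two points $t^1<t^2$ in $(0,\infty)$ with $\psi(t^1)=L=\psi(t^2)$, and moreover $\psi'(t^1)>0>\psi'(t^2)$. -/
import Mathlib


open Real Set Filter Topology

theorem stmt_9 (p q ν α A B S L : ℝ) (hp : 1 < p) (hpq : p < q) (hqν : q < ν)
    (hα0 : 0 < α) (hα1 : α < 1) (hA : 0 < A) (hB : 0 ≤ B) (hS : 0 < S) (hL : 0 < L) :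
    let ψ : ℝ → ℝ := fun t =>
      t ^ (p - ν) * A + t ^ (q - ν) * B - t ^ (-ν - α + 1) * S
    (∃ tm : ℝ, 0 < tm ∧ (∀ t : ℝ, 0 < t → ψ t ≤ ψ tm) ∧ L < ψ tm) →
    ∃ t₁ t₂ : ℝ, 0 < t₁ ∧ t₁ < t₂ ∧ ψ t₁ = L ∧ ψ t₂ = L ∧
      0 < deriv ψ t₁ ∧ deriv ψ t₂ < 0 ∧
      ∀ t : ℝ, 0 < t → ψ t = L → t = t₁ ∨ t = t₂ := by
  intro ψ h
  obtain ⟨tm, htm, hmax, hLψ⟩ := h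
  have hpν : p - ν < 0 := by linarith
  have hqν' : q - ν < 0 := by linarith
  have hpα : 0 < p + α - 1 := by linarith
  have hqα : 0 < q + α - 1 := by linarith
  have hνα : 0 < ν + α - 1 := by linarith
  set φ := fun t : ℝ => (p - ν) * t ^ (p - ν - 1) * A + (q - ν) * t ^ (q - ν - 1) * B -
      (-ν - α + 1) * t ^ (-ν - α) * S with hφdef
  have hderiv : ∀ t : ℝ, 0 < t → HasDerivAt ψ (φ t) t := by
    intro t ht
    have h1 : HasDerivAt (fun t : ℝ => t ^ (p - ν) * A) ((p - ν) * t ^ (p - ν - 1) * A) t :=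
      (Real.hasDerivAt_rpow_const (Or.inl ht.ne')).mul_const A
    have h2 : HasDerivAt (fun t : ℝ => t ^ (q - ν) * B) ((q - ν) * t ^ (q - ν - 1) * B) t :=
      (Real.hasDerivAt_rpow_const (Or.inl ht.ne')).mul_const B
    have h3 : HasDerivAt (fun t : ℝ => t ^ (-ν - α + 1) * S)
        ((-ν - α + 1) * t ^ (-ν - α + 1 - 1) * S) t :=
      (Real.hasDerivAt_rpow_const (Or.inl ht.ne')).mul_const S
    have he : -ν - α + 1 - 1 = -ν - α := by ring
    rw [he] at h3
    exact (h1.add h2).sub h3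
  set g := fun t : ℝ => (p - ν) * t ^ (p + α - 1) * A + (q - ν) * t ^ (q + α - 1) * B +
      (ν + α - 1) * S with hgdef
  have hφg : ∀ t : ℝ, 0 < t → φ t = t ^ (-ν - α) * g t := by
    intro t ht
    have e1 : t ^ (p - ν - 1) = t ^ (-ν - α) * t ^ (p + α - 1) := by
      rw [← Real.rpow_add ht]; ring_nf
    have e2 : t ^ (q - ν - 1) = t ^ (-ν - α) * t ^ (q + α - 1) := by
      rw [← Real.rpow_add ht]; ring_nf
    simp only [hφdef, hgdef, e1, e2]; ring
  have hganti : StrictAntiOn g (Ioi (0 : ℝ)) := by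
    intro x hx y hy hxy
    have h1 : x ^ (p + α - 1) < y ^ (p + α - 1) := Real.rpow_lt_rpow (le_of_lt hx) hxy hpα
    have h2 : x ^ (q + α - 1) ≤ y ^ (q + α - 1) := Real.rpow_le_rpow (le_of_lt hx) hxy.le hqα.le
    have hPA : (p - ν) * A < 0 := mul_neg_of_neg_of_pos hpν hA
    have hQB : (q - ν) * B ≤ 0 := mul_nonpos_of_nonpos_of_nonneg hqν'.le hB
    have hc1 : (p - ν) * y ^ (p + α - 1) * A < (p - ν) * x ^ (p + α - 1) * A := by
      have := mul_lt_mul_of_neg_left h1 hPA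
      linarith [this]
    have hc2 : (q - ν) * y ^ (q + α - 1) * B ≤ (q - ν) * x ^ (q + α - 1) * B := by
      have := mul_le_mul_of_nonpos_left h2 hQB
      linarith [this]
    simp only [hgdef]; linarith
  have hderiv' : ∀ t : ℝ, 0 < t → deriv ψ t = φ t := fun t ht => (hderiv t ht).deriv
  have hlm : IsLocalMax ψ tm := by
    filter_upwards [isOpen_Ioi.mem_nhds (show tm ∈ Ioi (0:ℝ) from htm)] with t ht
    exact hmax t ht
  have hgtm : g tm = 0 := by
    have h0 : φ tm = 0 := by rw [← hderiv' tm htm]; exact hlm.deriv_eq_zero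
    have := hφg tm htm
    rw [h0] at this
    have hpow : (0:ℝ) < tm ^ (-ν - α) := Real.rpow_pos_of_pos htm _
    have := this.symm
    rcases mul_eq_zero.mp this with h | h
    · exact absurd h hpow.ne'
    · exact h
  have hpos : ∀ t : ℝ, 0 < t → t < tm → 0 < deriv ψ t := by
    intro t ht htm'
    rw [hderiv' t ht, hφg t ht]
    have : g tm < g t := hganti ht htm htm'
    exact mul_pos (Real.rpow_pos_of_pos ht _) (by linarith)
  have hneg : ∀ t : ℝ, tm < t → deriv ψ t < 0 := by
    intro t ht
    have ht0 : 0 < t := htm.trans ht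
    rw [hderiv' t ht0, hφg t ht0]
    have : g t < g tm := hganti htm (htm.trans ht) ht
    exact mul_neg_of_pos_of_neg (Real.rpow_pos_of_pos ht0 _) (by linarith)
  have hcontAt : ∀ t : ℝ, t ≠ 0 → ContinuousAt ψ t := by
    intro t ht
    exact (((Real.continuousAt_rpow_const t _ (Or.inl ht)).mul continuousAt_const).add
      ((Real.continuousAt_rpow_const t _ (Or.inl ht)).mul continuousAt_const)).sub
      ((Real.continuousAt_rpow_const t _ (Or.inl ht)).mul continuousAt_const)
  have hmono : StrictMonoOn ψ (Ioc 0 tm) := by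
    apply strictMonoOn_of_deriv_pos (convex_Ioc 0 tm)
    · exact fun t ht => (hcontAt t (ne_of_gt ht.1)).continuousWithinAt
    · rw [interior_Ioc]; exact fun t ht => hpos t ht.1 ht.2
  have hanti : StrictAntiOn ψ (Ici tm) := by
    apply strictAntiOn_of_deriv_neg (convex_Ici tm)
    · exact fun t ht => (hcontAt t (ne_of_gt (lt_of_lt_of_le htm ht))).continuousWithinAt
    · rw [interior_Ici]; exact fun t ht => hneg t ht
  -- small point s with ψ s < L
  have hsmall : ∃ s : ℝ, 0 < s ∧ s < tm ∧ ψ s < L := by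
    have hten : Tendsto (fun t : ℝ => t ^ (p + α - 1) * A + t ^ (q + α - 1) * B)
        (𝓝[>] (0:ℝ)) (𝓝 0) := by
      have c1 : ContinuousWithinAt (fun t : ℝ => t ^ (p + α - 1) * A + t ^ (q + α - 1) * B)
          (Ioi 0) 0 :=
        (((Real.continuousAt_rpow_const 0 _ (Or.inr hpα.le)).mul continuousAt_const).add
          ((Real.continuousAt_rpow_const 0 _ (Or.inr hqα.le)).mul
            continuousAt_const)).continuousWithinAt
      have h0 : (0:ℝ) ^ (p + α - 1) * A + (0:ℝ) ^ (q + α - 1) * B = 0 := by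
        rw [Real.zero_rpow hpα.ne', Real.zero_rpow hqα.ne']; ring
      simpa [ContinuousWithinAt, h0] using c1
    have hev : ∀ᶠ s in 𝓝[>] (0:ℝ),
        s ^ (p + α - 1) * A + s ^ (q + α - 1) * B < S :=
      hten.eventually (Filter.Tendsto.eventually_lt_const hS tendsto_id) |>.mono (fun _ h => h)
    have hev2 : ∀ᶠ s in 𝓝[>] (0:ℝ), s < tm :=
      eventually_nhdsWithin_of_eventually_nhds (Filter.Tendsto.eventually_lt_const htm tendsto_id)
    have hev3 : ∀ᶠ s in 𝓝[>] (0:ℝ), 0 < s := eventually_mem_nhdsWithin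
    obtain ⟨s, h1, h2, h3⟩ := (hev.and (hev2.and hev3)).exists
    refine ⟨s, h3, h2, ?_⟩
    have e1 : s ^ (p - ν) = s ^ (-ν - α + 1) * s ^ (p + α - 1) := by
      rw [← Real.rpow_add h3]; ring_nf
    have e2 : s ^ (q - ν) = s ^ (-ν - α + 1) * s ^ (q + α - 1) := by
      rw [← Real.rpow_add h3]; ring_nf
    have hψs : ψ s = s ^ (-ν - α + 1) * (s ^ (p + α - 1) * A + s ^ (q + α - 1) * B - S) := by
      simp only [ψ, e1, e2]; ring
    have : ψ s < 0 := by
      rw [hψs]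
      exact mul_neg_of_pos_of_neg (Real.rpow_pos_of_pos h3 _) (by linarith)
    linarith
  obtain ⟨s, hs0, hstm, hψs⟩ := hsmall
  -- large point T with ψ T < L
  have hlarge : ∃ T : ℝ, tm < T ∧ ψ T < L := by
    have t1 : Tendsto (fun t : ℝ => t ^ (p - ν)) atTop (𝓝 0) := by
      have := tendsto_rpow_neg_atTop (show (0:ℝ) < ν - p by linarith)
      simpa [neg_sub] using this
    have t2 : Tendsto (fun t : ℝ => t ^ (q - ν)) atTop (𝓝 0) := by
      have := tendsto_rpow_neg_atTop (show (0:ℝ) < ν - q by linarith)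
      simpa [neg_sub] using this
    have t3 : Tendsto (fun t : ℝ => t ^ (-ν - α + 1)) atTop (𝓝 0) := by
      have h := tendsto_rpow_neg_atTop (show (0:ℝ) < ν + α - 1 by linarith)
      simpa only [show -(ν + α - 1) = -ν - α + 1 by ring] using h
    have tψ : Tendsto ψ atTop (𝓝 0) := by
      have := ((t1.mul_const A).add (t2.mul_const B)).sub (t3.mul_const S)
      simpa using this
    have hev : ∀ᶠ t in atTop, ψ t < L := tψ.eventually (Filter.Tendsto.eventually_lt_const hL tendsto_id)
    obtain ⟨T, h1, h2⟩ := (hev.and (eventually_gt_atTop tm)).exists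
    exact ⟨T, h2, h1⟩
  obtain ⟨T, htmT, hψT⟩ := hlarge
  -- IVT
  have hcont1 : ContinuousOn ψ (Icc s tm) :=
    fun t ht => (hcontAt t (ne_of_gt (lt_of_lt_of_le hs0 ht.1))).continuousWithinAt
  have hcont2 : ContinuousOn ψ (Icc tm T) :=
    fun t ht => (hcontAt t (ne_of_gt (lt_of_lt_of_le htm ht.1))).continuousWithinAt
  obtain ⟨t₁, ht₁mem, hψt₁⟩ := intermediate_value_Ioo hstm.le hcont1
    (show L ∈ Ioo (ψ s) (ψ tm) from ⟨hψs, hLψ⟩)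
  obtain ⟨t₂, ht₂mem, hψt₂⟩ := intermediate_value_Ioo' htmT.le hcont2
    (show L ∈ Ioo (ψ T) (ψ tm) from ⟨hψT, hLψ⟩)
  have ht₁0 : 0 < t₁ := hs0.trans ht₁mem.1
  have ht₁tm : t₁ < tm := ht₁mem.2
  have htmt₂ : tm < t₂ := ht₂mem.1
  refine ⟨t₁, t₂, ht₁0, ht₁tm.trans htmt₂, hψt₁, hψt₂, hpos t₁ ht₁0 ht₁tm, hneg t₂ htmt₂, ?_⟩
  intro t ht hψt
  rcases lt_trichotomy t tm with hlt | heq | hgt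
  · left
    exact hmono.injOn ⟨ht, hlt.le⟩ ⟨ht₁0, ht₁tm.le⟩ (by rw [hψt, hψt₁])
  · exfalso; rw [heq] at hψt; linarith
  · right
    exact hanti.injOn hgt.le htmt₂.le (by rw [hψt, hψt₂])
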